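/- Let a, b, c be the tree automorphisms of the binary tree defined by the wreath recursions a = σ(a,c), b = σ(b,a), c = (c,c) (automaton number 2851; note c is the identity). Then the subsemigroup of the generated group G₂₈₅₁ generated by a and b is a free semigroup of rank 2: any two distinct finite nonempty words in the letters a and b represent distinct elements of G₂₈₅₁. In particular, G₂₈₅₁ has exponential growth. -/
import Mathlib


/-- An invertible automaton over the two-letter alphabet `Bool`:
a set of states `Q`, a transition map and an output map such that each state
acts on the alphabet by a permutation. -/
structure BinAutomaton (Q : Type*) where
  trans : Q → Bool → Q
  out : Q → Bool → Bool
  out_bij : ∀ q, Function.Bijective (out q)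

namespace BinAutomaton

variable {Q : Type*} (A : BinAutomaton Q)

/-- The action of a state on finite binary words:
`q(xw) = ρ(q,x) · (τ(q,x))(w)`. -/
def act : Q → List Bool → List Bool
  | _, [] => []
  | q, x :: w => A.out q x :: act (A.trans q x) w

theorem act_injective (q : Q) : Function.Injective (A.act q) := by
  intro u
  induction u generalizing q with
  | nil =>
    intro v h
    cases v with
    | nil => rfl
    | cons y v => simp [act] at h
  | cons x u ih =>
    intro v h
    cases v with
    | nil => simp [act] at h
    | cons y v =>
      simp only [act, List.cons.injEq] at h
      obtain ⟨h1, h2⟩ := h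
      obtain rfl : x = y := (A.out_bij q).1 h1
      rw [ih _ h2]

theorem act_surjective (q : Q) : Function.Surjective (A.act q) := by
  intro v
  induction v generalizing q with
  | nil => exact ⟨[], rfl⟩
  | cons y v ih =>
    obtain ⟨x, hx⟩ := (A.out_bij q).2 y
    obtain ⟨w, hw⟩ := ih (A.trans q x)
    exact ⟨x :: w, by simp [act, hx, hw]⟩

/-- The tree automorphism defined by the state `q`. -/
noncomputable def perm (q : Q) : Equiv.Perm (List Bool) :=
  Equiv.ofBijective (A.act q) ⟨A.act_injective q, A.act_surjective q⟩

/-- The group generated by the automaton: the subgroup of the group of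
bijections of the binary tree generated by the states. -/
noncomputable def autGroup : Subgroup (Equiv.Perm (List Bool)) :=
  Subgroup.closure (Set.range A.perm)

end BinAutomaton

/-- Helper constructing a 3-state automaton from the sections at `0`, the
sections at `1`, and the activity of each state. -/
def mkAut3 (t0 t1 : Fin 3 → Fin 3) (actv : Fin 3 → Bool) : BinAutomaton (Fin 3) where
  trans q x := cond x (t1 q) (t0 q)
  out q x := xor (actv q) x
  out_bij q := by
    have h : ∀ b : Bool, Function.Bijective fun x => xor b x := by decide
    exact h (actv q)

/-- Automaton number 2851:
`a = σ(a,c)`, `b = σ(b,a)`, `c = (c,c)` (states `0 = a`, `1 = b`, `2 = c`);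
note that `c` is the identity automorphism. -/
def A2851 : BinAutomaton (Fin 3) :=
  mkAut3 ![0, 1, 2] ![2, 0, 2] ![true, true, false]

noncomputable def a : Equiv.Perm (List Bool) := A2851.perm 0
noncomputable def b : Equiv.Perm (List Bool) := A2851.perm 1
noncomputable def c : Equiv.Perm (List Bool) := A2851.perm 2


namespace Aut2851

/-- The generator map: `true ↦ a`, `false ↦ b`. -/
noncomputable def f (x : Bool) : Equiv.Perm (List Bool) := cond x a b

/-- Product of the word `R`, applying the head first. -/
noncomputable def F (R : List Bool) : Equiv.Perm (List Bool) := ((R.map f).reverse).prod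

/-- The contribution of one generator to the first-level section. -/
def chunk (x g : Bool) : List Bool := if x then (if g then [] else [true]) else [g]

/-- First-level section of a positive word at input bit `x`. -/
def sec : Bool → List Bool → List Bool
  | _, [] => []
  | x, g :: t => chunk x g ++ sec (!x) t

/-- Measure for the induction: length plus the number of `b`s. -/
def mu (R : List Bool) : ℕ := R.length + R.count false

lemma F_nil : F [] = 1 := rfl

lemma F_cons (g : Bool) (t : List Bool) : F (g :: t) = F t * f g := by
  simp [F]

lemma F_append (A B : List Bool) : F (A ++ B) = F B * F A := by
  simp [F]

lemma a_act (v : List Bool) : a v = A2851.act 0 v := rfl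
lemma b_act (v : List Bool) : b v = A2851.act 1 v := rfl

lemma c_id : ∀ w : List Bool, A2851.act 2 w = w := by
  intro w
  induction w with
  | nil => rfl
  | cons x w ih =>
    have h1 : A2851.out 2 x = x := by cases x <;> rfl
    have h2 : A2851.trans 2 x = 2 := by cases x <;> rfl
    rw [BinAutomaton.act, h1, h2, ih]

lemma a_apply (x : Bool) (w : List Bool) :
    a (x :: w) = (!x) :: (cond x w (a w)) := by
  cases x with
  | false =>
    show A2851.act 0 (false :: w) = true :: A2851.act 0 w
    rw [BinAutomaton.act]; rfl
  | true =>
    show A2851.act 0 (true :: w) = false :: w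
    rw [BinAutomaton.act]
    have h2 : A2851.trans 0 true = 2 := rfl
    rw [h2, c_id]; rfl

lemma b_apply (x : Bool) (w : List Bool) :
    b (x :: w) = (!x) :: (cond x (a w) (b w)) := by
  cases x with
  | false =>
    show A2851.act 1 (false :: w) = true :: A2851.act 1 w
    rw [BinAutomaton.act]; rfl
  | true =>
    show A2851.act 1 (true :: w) = false :: A2851.act 0 w
    rw [BinAutomaton.act]
    have h2 : A2851.trans 1 true = 0 := rfl
    rw [h2]; rfl

lemma step (g x : Bool) (w : List Bool) :
    f g (x :: w) = (!x) :: F (chunk x g) w := by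
  cases g <;> cases x <;>
    simp [f, chunk, F, a_apply, b_apply]

lemma KL : ∀ (R : List Bool) (x : Bool) (w : List Bool),
    F R (x :: w) = (xor R.length.bodd x) :: F (sec x R) w := by
  intro R
  induction R with
  | nil => intro x w; simp [F, sec]
  | cons g t ih =>
    intro x w
    rw [F_cons, Equiv.Perm.mul_apply, step, ih]
    rw [show sec x (g :: t) = chunk x g ++ sec (!x) t from rfl, F_append,
      Equiv.Perm.mul_apply]
    congr 1
    show xor t.length.bodd (!x) = xor (t.length + 1).bodd x
    rw [Nat.bodd_succ]
    cases t.length.bodd <;> cases x <;> rfl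

lemma secEq {R₁ R₂ : List Bool} (h : F R₁ = F R₂) (x : Bool) :
    F (sec x R₁) = F (sec x R₂) := by
  apply Equiv.ext
  intro w
  have h' : F R₁ (x :: w) = F R₂ (x :: w) := by rw [h]
  rw [KL, KL] at h'
  exact (List.cons.injEq _ _ _ _ ▸ h').2

lemma reconstruct : ∀ R₁ R₂ : List Bool,
    sec false R₁ = sec false R₂ → sec true R₁ = sec true R₂ → R₁ = R₂ := by
  intro R₁
  induction R₁ with
  | nil =>
    intro R₂ h0 _
    cases R₂ with
    | nil => rfl
    | cons h u => simp [sec, chunk] at h0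
  | cons g t ih =>
    intro R₂ h0 h1
    cases R₂ with
    | nil => simp [sec, chunk] at h0
    | cons h u =>
      have h0'' : g :: sec true t = h :: sec true u := h0
      injection h0'' with hg h0'
      subst hg
      have h1'' : chunk true g ++ sec false t = chunk true g ++ sec false u := h1
      have h1' := List.append_cancel_left h1''
      exact congrArg _ (ih u h1' h0')

lemma mu_cons_true (L : List Bool) : mu (true :: L) = 1 + mu L := by
  simp [mu, List.count_cons]; omega

lemma mu_cons_false (L : List Bool) : mu (false :: L) = 2 + mu L := by
  simp [mu, List.count_cons]; omega

lemma mu_le : ∀ R : List Bool,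
    mu (sec false R) ≤ mu R ∧ (R ≠ [] → mu (sec true R) < mu R) := by
  intro R
  induction R with
  | nil => exact ⟨le_refl _, fun h => absurd rfl h⟩
  | cons g t ih =>
    obtain ⟨ih0, ih1⟩ := ih
    have ht : mu (sec true t) ≤ mu t := by
      cases t with
      | nil => exact le_refl _
      | cons h u => exact le_of_lt (ih1 (by simp))
    constructor
    · show mu (chunk false g ++ sec true t) ≤ mu (g :: t)
      cases g with
      | true =>
        rw [show chunk false true = [true] from rfl, List.cons_append,
          List.nil_append, mu_cons_true, mu_cons_true]
        omega
      | false =>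
        rw [show chunk false false = [false] from rfl, List.cons_append,
          List.nil_append, mu_cons_false, mu_cons_false]
        omega
    · intro _
      show mu (chunk true g ++ sec false t) < mu (g :: t)
      cases g with
      | true =>
        rw [show chunk true true = [] from rfl, List.nil_append, mu_cons_true]
        omega
      | false =>
        rw [show chunk true false = [true] from rfl, List.cons_append,
          List.nil_append, mu_cons_true, mu_cons_false]
        omega

lemma mu_true_le (R : List Bool) : mu (sec true R) ≤ mu R := by
  cases R with
  | nil => exact le_refl _
  | cons g t => exact le_of_lt ((mu_le _).2 (by simp))

lemma mu_false_lt (R : List Bool) (h : 2 ≤ R.length) :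
    mu (sec false R) < mu R := by
  cases R with
  | nil => simp at h
  | cons g t =>
    have ht : t ≠ [] := by
      cases t with
      | nil => simp at h
      | cons _ _ => simp
    have hlt := (mu_le t).2 ht
    show mu (chunk false g ++ sec true t) < mu (g :: t)
    cases g with
    | true =>
      rw [show chunk false true = [true] from rfl, List.cons_append,
        List.nil_append, mu_cons_true, mu_cons_true]
      omega
    | false =>
      rw [show chunk false false = [false] from rfl, List.cons_append,
        List.nil_append, mu_cons_false, mu_cons_false]
      omega

lemma F_singleton_true : F [true] = a := by simp [F, f]
lemma F_singleton_false : F [false] = b := by simp [F, f]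

lemma a_ne_one : a ≠ 1 := by
  intro h
  have : a [false] = [false] := by rw [h]; rfl
  rw [a_apply] at this
  simp at this

lemma b_ne_one : b ≠ 1 := by
  intro h
  have : b [false] = [false] := by rw [h]; rfl
  rw [b_apply] at this
  simp at this

lemma a_ne_b : a ≠ b := by
  intro h
  have : a [true, false] = b [true, false] := by rw [h]
  rw [a_apply, b_apply, a_apply] at this
  simp at this

lemma small (R : List Bool) (h : R.length ≤ 1) :
    R = [] ∨ R = [true] ∨ R = [false] := by
  cases R with
  | nil => exact Or.inl rfl
  | cons g t =>
    cases t with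
    | nil => cases g with
      | true => exact Or.inr (Or.inl rfl)
      | false => exact Or.inr (Or.inr rfl)
    | cons _ _ => simp at h

lemma MT : ∀ (n : ℕ) (R₁ R₂ : List Bool), mu R₁ + mu R₂ ≤ n →
    F R₁ = F R₂ → R₁ = R₂ := by
  intro n
  induction n with
  | zero =>
    intro R₁ R₂ hn _
    have h1 : R₁ = [] := by
      cases R₁ with
      | nil => rfl
      | cons g t =>
        cases g
        · rw [mu_cons_false] at hn; omega
        · rw [mu_cons_true] at hn; omega
    have h2 : R₂ = [] := by
      cases R₂ with
      | nil => rfl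
      | cons g t =>
        cases g
        · rw [mu_cons_false] at hn; omega
        · rw [mu_cons_true] at hn; omega
    rw [h1, h2]
  | succ n ih =>
    intro R₁ R₂ hn h
    by_cases hs : R₁.length ≤ 1 ∧ R₂.length ≤ 1
    · -- small case
      rcases small R₁ hs.1 with rfl | rfl | rfl <;>
        rcases small R₂ hs.2 with rfl | rfl | rfl <;>
        first
          | rfl
          | (rw [F_nil, F_singleton_true] at h
             exact absurd h.symm a_ne_one)
          | (rw [F_nil, F_singleton_false] at h
             exact absurd h.symm b_ne_one)
          | (rw [F_singleton_true, F_nil] at h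
             exact absurd h a_ne_one)
          | (rw [F_singleton_false, F_nil] at h
             exact absurd h b_ne_one)
          | (rw [F_singleton_true, F_singleton_false] at h
             exact absurd h a_ne_b)
          | (rw [F_singleton_false, F_singleton_true] at h
             exact absurd h.symm a_ne_b)
    · -- big case: some word has length ≥ 2
      have hbig : 2 ≤ R₁.length ∨ 2 ≤ R₂.length := by
        rcases not_and_or.mp hs with h' | h'
        · exact Or.inl (by omega)
        · exact Or.inr (by omega)
      have hne : R₁ ≠ [] ∨ R₂ ≠ [] := by
        rcases hbig with h' | h'
        · exact Or.inl (by intro e; rw [e] at h'; simp at h')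
        · exact Or.inr (by intro e; rw [e] at h'; simp at h')
      have dT : mu (sec true R₁) + mu (sec true R₂) ≤ n := by
        have t1 := mu_true_le R₁
        have t2 := mu_true_le R₂
        rcases hne with h' | h'
        · have := (mu_le R₁).2 h'; omega
        · have := (mu_le R₂).2 h'; omega
      have dF : mu (sec false R₁) + mu (sec false R₂) ≤ n := by
        have t1 := (mu_le R₁).1
        have t2 := (mu_le R₂).1
        rcases hbig with h' | h'
        · have := mu_false_lt R₁ h'; omega
        · have := mu_false_lt R₂ h'; omega
      exact reconstruct R₁ R₂ (ih _ _ dF (secEq h false)) (ih _ _ dT (secEq h true))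

lemma F_injective : Function.Injective F :=
  fun R₁ R₂ h => MT (mu R₁ + mu R₂) R₁ R₂ (le_refl _) h

lemma prod_eq (L : List Bool) :
    (L.map f).prod = F L.reverse := by
  simp [F]

lemma finite_lists {α : Type*} (G : Set α) (hG : G.Finite) :
    ∀ n : ℕ, {L : List α | (∀ x ∈ L, x ∈ G) ∧ L.length ≤ n}.Finite := by
  intro n
  induction n with
  | zero =>
    apply Set.Finite.subset (Set.finite_singleton ([] : List α))
    rintro L ⟨_, hl⟩
    simp only [Nat.le_zero, List.length_eq_zero_iff] at hl
    simp [hl]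
  | succ n ih =>
    apply Set.Finite.subset
      (Set.Finite.insert [] (Set.Finite.image2 List.cons hG ih))
    rintro L ⟨hmem, hl⟩
    cases L with
    | nil => exact Set.mem_insert _ _
    | cons g t =>
      refine Set.mem_insert_of_mem _ (Set.mem_image2_of_mem (hmem g (by simp)) ?_)
      refine ⟨fun x hx => hmem x (by simp [hx]), ?_⟩
      simpa using hl

end Aut2851

/-- In the group `G₂₈₅₁` generated by automaton 2851, the subsemigroup
generated by `a` and `b` is free of rank 2: distinct nonempty positive words
in `a` and `b` represent distinct elements.  In particular `G₂₈₅₁` has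
exponential growth: the ball of radius `n` with respect to the generating set
`{a,b,c}` contains at least `2ⁿ` elements. -/
theorem automaton2851_free_subsemigroup_and_exponential_growth :
    (∀ L₁ L₂ : List Bool, L₁ ≠ [] → L₂ ≠ [] → L₁ ≠ L₂ →
      (L₁.map fun x => cond x a b).prod ≠ (L₂.map fun x => cond x a b).prod) ∧
    (∀ n : ℕ, 2 ^ n ≤ Set.ncard {g : Equiv.Perm (List Bool) |
      ∃ L : List (Equiv.Perm (List Bool)),
        (∀ x ∈ L, x ∈ ({a, a⁻¹, b, b⁻¹, c, c⁻¹} : Set (Equiv.Perm (List Bool)))) ∧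
        L.length ≤ n ∧ L.prod = g}) := by
  constructor
  · intro L₁ L₂ _ _ hne h
    apply hne
    have h' : Aut2851.F L₁.reverse = Aut2851.F L₂.reverse := by
      rw [← Aut2851.prod_eq, ← Aut2851.prod_eq]
      exact h
    have := Aut2851.F_injective h'
    exact List.reverse_injective this
  · intro n
    classical
    set gens : Set (Equiv.Perm (List Bool)) := {a, a⁻¹, b, b⁻¹, c, c⁻¹} with hgens
    set ball : Set (Equiv.Perm (List Bool)) :=
      {g | ∃ L : List (Equiv.Perm (List Bool)),
        (∀ x ∈ L, x ∈ gens) ∧ L.length ≤ n ∧ L.prod = g} with hball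
    have hGfin : gens.Finite := Set.toFinite _
    have hball_fin : ball.Finite := by
      apply Set.Finite.subset
        ((Aut2851.finite_lists gens hGfin n).image List.prod)
      rintro g ⟨L, hL, hlen, rfl⟩
      exact ⟨L, ⟨hL, hlen⟩, rfl⟩
    -- the injection from binary words of length n
    have hinj : Function.Injective
        (fun v : Fin n → Bool => Aut2851.F (List.ofFn v)) := by
      intro v u hvu
      exact List.ofFn_injective (Aut2851.F_injective hvu)
    set s : Finset (Equiv.Perm (List Bool)) :=
      (Finset.univ : Finset (Fin n → Bool)).image
        (fun v => Aut2851.F (List.ofFn v)) with hs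
    have hcard : s.card = 2 ^ n := by
      rw [hs, Finset.card_image_of_injective _ hinj]
      simp
    have hsub : (↑s : Set (Equiv.Perm (List Bool))) ⊆ ball := by
      intro g hg
      simp only [hs, Finset.coe_image, Set.mem_image, Finset.coe_univ,
        Set.mem_univ, true_and] at hg
      obtain ⟨v, rfl⟩ := hg
      refine ⟨((List.ofFn v).map Aut2851.f).reverse, ?_, ?_, ?_⟩
      · intro x hx
        rw [List.mem_reverse] at hx
        obtain ⟨y, _, rfl⟩ := List.mem_map.mp hx
        cases y with
        | true =>
          show a ∈ gens
          rw [hgens]; simp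
        | false =>
          show b ∈ gens
          rw [hgens]; simp
      · simp
      · rfl
    calc 2 ^ n = s.card := hcard.symm
      _ = (↑s : Set (Equiv.Perm (List Bool))).ncard := (Set.ncard_coe_finset s).symm
      _ ≤ ball.ncard := Set.ncard_le_ncard hsub hball_fin
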